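/- Existence of the Tsallis entropy: let q > 0 with q ≠ 1. If ∫_ℝ g^q(w) dw < ∞ (i.e. the Tsallis entropy S_q(W) of the kernel exists), then ∫_ℝ f^q(x; θ) dx ≤ ((ρ+δ)/Z_θ)^q · σ · ∫_ℝ g^q(w) dw < ∞; hence the Tsallis entropy S_q(X) = (1/(q−1))·[1 − ∫_ℝ f^q(x; θ) dx] of X ~ TD(θ) exists. -/

import Mathlib

open MeasureTheory Real Set Filter

noncomputable def lincGamma (p u : ℝ) : ℝ := ∫ w in (0:ℝ)..u, w ^ (p - 1) * Real.exp (-w)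

noncomputable def Tfun (p α x : ℝ) : ℝ := lincGamma p (x ^ 2 / α ^ 2) / Real.Gamma p

noncomputable def gammaPDF (p y : ℝ) : ℝ := y ^ (p - 1) * Real.exp (-y) / Real.Gamma p

noncomputable def Znorm (p σ α ρ δ : ℝ) (g : ℝ → ℝ) : ℝ :=
  σ * ∫ w : ℝ, (ρ + δ * Tfun p α w) * g w

noncomputable def tdPDF (p μ σ α ρ δ : ℝ) (g : ℝ → ℝ) (x : ℝ) : ℝ :=
  (1 / Znorm p σ α ρ δ g) * (ρ + δ * Tfun p α ((x - μ) / σ)) * g ((x - μ) / σ)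

noncomputable def cdfOf (d : ℝ → ℝ) (x : ℝ) : ℝ := ∫ t in Iic x, d t

lemma lincGamma_intInt (p : ℝ) (hp : 0 < p) (a b : ℝ) :
    IntervalIntegrable (fun w => w ^ (p - 1) * Real.exp (-w)) volume a b :=
  (intervalIntegral.intervalIntegrable_rpow' (by linarith)).mul_continuousOn
    (Continuous.continuousOn (by continuity))

lemma lincGamma_nonneg (p : ℝ) (u : ℝ) (hu : 0 ≤ u) : 0 ≤ lincGamma p u := by
  apply intervalIntegral.integral_nonneg hu
  intro w hw
  exact mul_nonneg (Real.rpow_nonneg hw.1 _) (Real.exp_pos _).le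

lemma lincGamma_le_Gamma (p : ℝ) (hp : 0 < p) (u : ℝ) (hu : 0 ≤ u) :
    lincGamma p u ≤ Real.Gamma p := by
  rw [lincGamma, intervalIntegral.integral_of_le hu, Real.Gamma_eq_integral hp]
  have hfi : IntegrableOn (fun x : ℝ => x ^ (p - 1) * Real.exp (-x)) (Ioi 0) volume :=
    (Real.GammaIntegral_convergent hp).congr_fun (fun x _ => mul_comm _ _) measurableSet_Ioi
  have hmono := setIntegral_mono_set hfi
    (by filter_upwards [ae_restrict_mem measurableSet_Ioi] with x hx using
      mul_nonneg (Real.rpow_nonneg (le_of_lt hx) _) (Real.exp_pos _).le)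
    (ae_of_all _ (Ioc_subset_Ioi_self : Ioc 0 u ⊆ Ioi 0))
  exact hmono.trans (le_of_eq (setIntegral_congr_fun measurableSet_Ioi
    fun x _ => mul_comm _ _))

lemma lincGamma_pos (p : ℝ) (hp : 0 < p) (u : ℝ) (hu : 0 < u) : 0 < lincGamma p u := by
  apply intervalIntegral.intervalIntegral_pos_of_pos_on (lincGamma_intInt p hp 0 u) _ hu
  intro w hw
  exact mul_pos (Real.rpow_pos_of_pos hw.1 _) (Real.exp_pos _)

lemma Tfun_nonneg (p α : ℝ) (hp : 0 < p) (x : ℝ) : 0 ≤ Tfun p α x :=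
  div_nonneg (lincGamma_nonneg p _ (div_nonneg (sq_nonneg x) (sq_nonneg α)))
    (Real.Gamma_pos_of_pos hp).le

lemma Tfun_le_one (p α : ℝ) (hp : 0 < p) (x : ℝ) : Tfun p α x ≤ 1 :=
  (div_le_one (Real.Gamma_pos_of_pos hp)).2
    (lincGamma_le_Gamma p hp _ (div_nonneg (sq_nonneg x) (sq_nonneg α)))

lemma Tfun_pos (p α : ℝ) (hp : 0 < p) (hα : 0 < α) (x : ℝ) (hx : x ≠ 0) :
    0 < Tfun p α x :=
  div_pos (lincGamma_pos p hp _ (div_pos (by positivity) (by positivity)))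
    (Real.Gamma_pos_of_pos hp)

lemma Tfun_continuous (p α : ℝ) (hp : 0 < p) : Continuous (Tfun p α) := by
  have h1 : Continuous (lincGamma p) :=
    intervalIntegral.continuous_primitive (lincGamma_intInt p hp) 0
  exact (h1.comp (by continuity)).div_const _

/-- existence of the Tsallis entropy of the trimodal distribution. -/
theorem stmt10 (p μ σ α ρ δ : ℝ) (hp : 0 < p) (hσ : 0 < σ) (hα : 0 < α)
    (hρ : 0 ≤ ρ) (hδ : 0 ≤ δ) (hρδ : 0 < ρ + δ)
    (g : ℝ → ℝ) (hg0 : ∀ x, 0 ≤ g x) (hgm : Measurable g)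
    (hgi : Integrable g) (hg1 : (∫ x : ℝ, g x) = 1)
    (q : ℝ) (hq : 0 < q) (hq1 : q ≠ 1)
    (hgq : Integrable (fun w : ℝ => g w ^ q)) :
    Integrable (fun x : ℝ => tdPDF p μ σ α ρ δ g x ^ q)
    ∧ (∫ x : ℝ, tdPDF p μ σ α ρ δ g x ^ q)
        ≤ ((ρ + δ) / Znorm p σ α ρ δ g) ^ q * σ * (∫ w : ℝ, g w ^ q) := by
  have hTc := Tfun_continuous p α hp
  have hT0 := Tfun_nonneg p α hp
  have hT1 := Tfun_le_one p α hp
  -- basic facts about h w = (ρ + δ T w) g w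
  set h : ℝ → ℝ := fun w => (ρ + δ * Tfun p α w) * g w with hh
  have hh0 : ∀ w, 0 ≤ h w := fun w =>
    mul_nonneg (by nlinarith [hT0 w]) (hg0 w)
  have hhle : ∀ w, h w ≤ (ρ + δ) * g w := fun w =>
    mul_le_mul_of_nonneg_right (by nlinarith [hT1 w, hT0 w]) (hg0 w)
  have hhm : Measurable h := ((measurable_const.add
    (hTc.measurable.const_mul δ)).mul hgm)
  have hhi : Integrable h := by
    refine (hgi.const_mul (ρ + δ)).mono' hhm.aestronglyMeasurable (ae_of_all _ fun w => ?_)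
    rw [Real.norm_eq_abs, abs_of_nonneg (hh0 w)]
    exact hhle w
  -- positivity of the integral of h
  have hIpos : 0 < ∫ w : ℝ, h w := by
    rcases lt_or_eq_of_le (integral_nonneg (f := h) hh0) with hlt | heq
    · exact hlt
    · exfalso
      have hz : h =ᵐ[volume] 0 := (integral_eq_zero_iff_of_nonneg (f := h) hh0 hhi).1 heq.symm
      have hne : ∀ᵐ w : ℝ, w ≠ (0:ℝ) := by
        refine (ae_iff).2 ?_
        simpa using measure_singleton (0 : ℝ)
      have hg0ae : g =ᵐ[volume] 0 := by
        filter_upwards [hz, hne] with w hw hwne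
        have hpos : 0 < ρ + δ * Tfun p α w := by
          rcases hρ.lt_or_eq with h1 | h1
          · nlinarith [hT0 w]
          · have hδp : 0 < δ := by linarith
            have := Tfun_pos p α hp hα w hwne
            nlinarith
        have : (ρ + δ * Tfun p α w) * g w = 0 := hw
        have := mul_eq_zero.1 this
        rcases this with h2 | h2
        · exact absurd h2 (ne_of_gt hpos)
        · exact h2
      have : (∫ x : ℝ, g x) = 0 := by
        rw [integral_congr_ae hg0ae]; simp
      rw [hg1] at this; exact one_ne_zero this
  have hZpos : 0 < Znorm p σ α ρ δ g := mul_pos hσ hIpos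
  set Z := Znorm p σ α ρ δ g with hZ
  -- pointwise bounds for f
  have hf0 : ∀ x, 0 ≤ tdPDF p μ σ α ρ δ g x := fun x =>
    mul_nonneg (mul_nonneg (by positivity) (by nlinarith [hT0 ((x - μ)/σ)])) (hg0 _)
  have hfle : ∀ x, tdPDF p μ σ α ρ δ g x ≤ ((ρ + δ) / Z) * g ((x - μ)/σ) := by
    intro x
    unfold tdPDF
    rw [← hZ]
    have h1 : (1 / Z) * (ρ + δ * Tfun p α ((x - μ)/σ)) ≤ (ρ + δ) / Z := by
      rw [mul_comm, ← div_eq_mul_one_div]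
      exact (div_le_div_iff_of_pos_right hZpos).2 (by nlinarith [hT1 ((x - μ)/σ), hT0 ((x - μ)/σ)])
    exact mul_le_mul_of_nonneg_right h1 (hg0 _)
  have hC0 : (0:ℝ) ≤ (ρ + δ) / Z := by positivity
  have hfq_le : ∀ x, tdPDF p μ σ α ρ δ g x ^ q
      ≤ ((ρ + δ) / Z) ^ q * g ((x - μ)/σ) ^ q := by
    intro x
    calc tdPDF p μ σ α ρ δ g x ^ q ≤ (((ρ + δ) / Z) * g ((x - μ)/σ)) ^ q :=
          Real.rpow_le_rpow (hf0 x) (hfle x) hq.le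
      _ = ((ρ + δ) / Z) ^ q * g ((x - μ)/σ) ^ q := Real.mul_rpow hC0 (hg0 _)
  -- integrability of the dominating function
  have hD1 : Integrable (fun x : ℝ => g ((x - μ)/σ) ^ q) := by
    have h1 : Integrable (fun y : ℝ => g (y/σ) ^ q) := hgq.comp_div hσ.ne'
    have h2 := h1.comp_sub_right μ
    simpa using h2
  have hDint : Integrable (fun x : ℝ => ((ρ + δ) / Z) ^ q * g ((x - μ)/σ) ^ q) :=
    hD1.const_mul _
  -- measurability of f^q
  have hfm : Measurable (fun x : ℝ => tdPDF p μ σ α ρ δ g x ^ q) := by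
    unfold tdPDF
    have : Measurable (Tfun p α) := hTc.measurable
    fun_prop
  have hint : Integrable (fun x : ℝ => tdPDF p μ σ α ρ δ g x ^ q) := by
    refine hDint.mono' hfm.aestronglyMeasurable (ae_of_all _ fun x => ?_)
    rw [Real.norm_eq_abs, abs_of_nonneg (Real.rpow_nonneg (hf0 x) q)]
    exact hfq_le x
  refine ⟨hint, ?_⟩
  have hle : (∫ x : ℝ, tdPDF p μ σ α ρ δ g x ^ q)
      ≤ ∫ x : ℝ, ((ρ + δ) / Z) ^ q * g ((x - μ)/σ) ^ q :=
    integral_mono hint hDint hfq_le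
  have hcomp : (∫ x : ℝ, g ((x - μ)/σ) ^ q) = σ * ∫ w : ℝ, g w ^ q := by
    have h1 : (∫ x : ℝ, g ((x + -μ)/σ) ^ q) = ∫ y : ℝ, g (y/σ) ^ q :=
      integral_add_right_eq_self (fun y : ℝ => g (y/σ) ^ q) (-μ)
    have h2 : (∫ y : ℝ, g (y/σ) ^ q) = |σ| • ∫ w : ℝ, g w ^ q :=
      Measure.integral_comp_div (fun w : ℝ => g w ^ q) σ
    rw [show (fun x : ℝ => g ((x - μ)/σ) ^ q) = fun x : ℝ => g ((x + -μ)/σ) ^ q by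
      funext x; rw [sub_eq_add_neg], h1, h2, abs_of_pos hσ, smul_eq_mul]
  calc (∫ x : ℝ, tdPDF p μ σ α ρ δ g x ^ q)
      ≤ ∫ x : ℝ, ((ρ + δ) / Z) ^ q * g ((x - μ)/σ) ^ q := hle
    _ = ((ρ + δ) / Z) ^ q * ∫ x : ℝ, g ((x - μ)/σ) ^ q := integral_const_mul _ _
    _ = ((ρ + δ) / Z) ^ q * σ * (∫ w : ℝ, g w ^ q) := by rw [hcomp]; ring
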